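/- Let M be a proper closed subspace of a real normed space E and let f be a continuous linear functional on M. Then: (a) there exist distinct f₁, f₂ ∈ E* with f₁|_M = f₂|_M = f and ‖f₁‖ = ‖f₂‖; (b) for every real number r > ‖f‖ there exist at least two distinct f̃₁, f̃₂ ∈ E* with f̃₁|_M = f̃₂|_M = f and ‖f̃₁‖ = ‖f̃₂‖ = r. -/
import Mathlib


noncomputable section

/-- A nonzero continuous functional vanishing on a proper closed subspace. -/
lemma aux_exists_vanishing {E : Type*} [NormedAddCommGroup E] [NormedSpace ℝ E]
    (M : Submodule ℝ E) (hM : M ≠ ⊤) (hMc : IsClosed (M : Set E)) :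
    ∃ g : E →L[ℝ] ℝ, g ≠ 0 ∧ ∀ m ∈ M, g m = 0 := by
  obtain ⟨x, hx⟩ : ∃ x, x ∉ M := by
    by_contra h
    push_neg at h
    exact hM (Submodule.eq_top_iff'.mpr h)
  obtain ⟨g, u, hgx, hgt⟩ := geometric_hahn_banach_point_closed
    (M.convex) hMc hx
  have hzero : ∀ m ∈ M, g m = 0 := by
    intro m hm
    by_contra hne
    -- u < g (t • m) = t * g m for all t, contradiction by choosing t
    have key : ∀ t : ℝ, u < t * g m := by
      intro t
      have := hgt (t • m) (M.smul_mem t hm)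
      simpa using this
    rcases lt_or_gt_of_ne hne with h1 | h1
    · have := key ((u - 1) / g m)
      rw [div_mul_cancel₀ _ (ne_of_lt h1)] at this
      linarith
    · have := key ((u - 1) / g m)
      rw [div_mul_cancel₀ _ (ne_of_gt h1)] at this
      linarith
  have hu0 : u < 0 := by simpa using hgt 0 M.zero_mem
  refine ⟨g, ?_, hzero⟩
  intro h0
  rw [h0] at hgx
  simp at hgx
  linarith

theorem statement10 {E : Type*} [NormedAddCommGroup E] [NormedSpace ℝ E]
    (M : Submodule ℝ E) (hM : M ≠ ⊤) (hMc : IsClosed (M : Set E))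
    (f : M →L[ℝ] ℝ) :
    (∃ f₁ f₂ : E →L[ℝ] ℝ, f₁ ≠ f₂ ∧ f₁.comp M.subtypeL = f ∧ f₂.comp M.subtypeL = f ∧
      ‖f₁‖ = ‖f₂‖) ∧
    (∀ r : ℝ, ‖f‖ < r →
      ∃ f₁ f₂ : E →L[ℝ] ℝ, f₁ ≠ f₂ ∧ f₁.comp M.subtypeL = f ∧ f₂.comp M.subtypeL = f ∧
        ‖f₁‖ = r ∧ ‖f₂‖ = r) := by
  obtain ⟨g, hg0, hgM⟩ := aux_exists_vanishing M hM hMc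
  obtain ⟨h, hh, hhn⟩ := exists_extension_norm_eq M f
  have hgpos : (0:ℝ) < ‖g‖ := norm_pos_iff.mpr hg0
  have main : ∀ r : ℝ, ‖f‖ < r →
      ∃ f₁ f₂ : E →L[ℝ] ℝ, f₁ ≠ f₂ ∧ f₁.comp M.subtypeL = f ∧ f₂.comp M.subtypeL = f ∧
        ‖f₁‖ = r ∧ ‖f₂‖ = r := by
    intro r hr
    set T : ℝ := (r + ‖h‖) / ‖g‖ with hT
    have hT0 : 0 ≤ T := by
      apply div_nonneg _ hgpos.le
      have := norm_nonneg h
      linarith [norm_nonneg f]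
    have hbig : ∀ s : E →L[ℝ] ℝ, r ≤ ‖s + T • g‖ ∧ r ≤ ‖s - T • g‖ → True := fun _ _ => trivial
    have hlow : ∀ c : ℝ, |c| * ‖g‖ - ‖h‖ ≤ ‖h + c • g‖ := by
      intro c
      have h1 : ‖c • g‖ ≤ ‖h + c • g‖ + ‖h‖ := by
        calc ‖c • g‖ = ‖(h + c • g) - h‖ := by rw [add_sub_cancel_left]
        _ ≤ ‖h + c • g‖ + ‖h‖ := norm_sub_le _ _
      have h3 : ‖c • g‖ = |c| * ‖g‖ := by
        rw [norm_smul c g, Real.norm_eq_abs]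
      linarith
    have hcont : Continuous fun t : ℝ => ‖h + t • g‖ :=
      (continuous_const.add (continuous_id.smul continuous_const)).norm
    have hφ0 : ‖h + (0:ℝ) • g‖ < r := by
      simpa [hhn] using hr
    have hTr : ∀ c : ℝ, |c| = T → r ≤ ‖h + c • g‖ := by
      intro c hc
      have := hlow c
      rw [hc, hT, div_mul_cancel₀ _ (ne_of_gt hgpos)] at this
      linarith
    -- positive side
    obtain ⟨t₁, ht₁mem, ht₁⟩ : ∃ t₁ ∈ Set.Icc (0:ℝ) T, ‖h + t₁ • g‖ = r := by
      have := intermediate_value_Icc hT0 (hcont.continuousOn)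
      have hrmem : r ∈ Set.Icc ‖h + (0:ℝ) • g‖ ‖h + T • g‖ :=
        ⟨hφ0.le, hTr T (abs_of_nonneg hT0)⟩
      exact this hrmem
    -- negative side
    obtain ⟨t₂, ht₂mem, ht₂⟩ : ∃ t₂ ∈ Set.Icc (-T) (0:ℝ), ‖h + t₂ • g‖ = r := by
      have hle : -T ≤ (0:ℝ) := neg_nonpos.mpr hT0
      have := intermediate_value_Icc' hle (hcont.continuousOn)
      have hrmem : r ∈ Set.Icc ‖h + (0:ℝ) • g‖ ‖h + (-T) • g‖ :=
        ⟨hφ0.le, hTr (-T) (by rw [abs_neg, abs_of_nonneg hT0])⟩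
      exact this hrmem
    refine ⟨h + t₁ • g, h + t₂ • g, ?_, ?_, ?_, ht₁, ht₂⟩
    · intro heq
      obtain ⟨x₀, hx₀⟩ := DFunLike.ne_iff.mp hg0
      have ht12 : t₁ = t₂ := by
        have hev : t₁ * g x₀ = t₂ * g x₀ := by
          have := congrArg (fun φ : E →L[ℝ] ℝ => φ x₀) heq
          simpa using this
        have hx₀' : g x₀ ≠ 0 := by simpa using hx₀
        exact mul_right_cancel₀ hx₀' hev
      have ht10 : t₁ = 0 := le_antisymm (ht12 ▸ ht₂mem.2) ht₁mem.1
      rw [ht10] at ht₁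
      simp [hhn] at ht₁
      linarith
    · ext m
      simp [hh m, hgM m m.2]
    · ext m
      simp [hh m, hgM m m.2]
  refine ⟨?_, main⟩
  obtain ⟨f₁, f₂, hne, h1, h2, hn1, hn2⟩ := main (‖f‖ + 1) (by linarith)
  exact ⟨f₁, f₂, hne, h1, h2, by rw [hn1, hn2]⟩
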